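/- Let (X,d) be a metric space and μ a Borel measure on X that is finite on every bounded Borel set and positive on every nonempty open set, and let s > 0. If there is a constant C > 0 such that ‖A_s f‖_{L^1(μ)} ≤ C ‖f‖_{L^1(μ)} for every f ∈ L^1(μ), then a_s(y) ≤ C for μ-almost every y, i.e., ‖a_s‖_{L^∞(μ)} ≤ C. -/

import Mathlib

open MeasureTheory Metric ENNReal

/-- The averaging operator `A_s f(x) = (1/μ(B^cl(x,s))) ∫_{B^cl(x,s)} f dμ`
over closed balls. -/
noncomputable def avgOp {X : Type*} [MetricSpace X] [MeasurableSpace X]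
    (μ : Measure X) (r : ℝ) (f : X → ℝ) (x : X) : ℝ :=
  (μ (closedBall x r)).toReal⁻¹ * ∫ y in closedBall x r, f y ∂μ

/-- The conjugate function `a_s(y) = ∫_X 1_{B^cl(y,s)}(x) / μ(B^cl(x,s)) dμ(x)`. -/
noncomputable def conjFn {X : Type*} [MetricSpace X] [MeasurableSpace X]
    (μ : Measure X) (s : ℝ) (y : X) : ℝ≥0∞ :=
  ∫⁻ x in closedBall y s, (μ (closedBall x s))⁻¹ ∂μ

/-- If `‖A_s f‖_{L¹(μ)} ≤ C ‖f‖_{L¹(μ)}` for every `f ∈ L¹(μ)`, then `a_s(y) ≤ C`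
for `μ`-almost every `y`, i.e. `‖a_s‖_{L^∞(μ)} ≤ C`. -/
theorem stmt2 {X : Type*} [MetricSpace X] [MeasurableSpace X] [BorelSpace X]
    (μ : Measure X)
    (hfin : ∀ s : Set X, Bornology.IsBounded s → μ s < ⊤)
    (hpos : ∀ U : Set X, IsOpen U → U.Nonempty → 0 < μ U)
    (s : ℝ) (hs : 0 < s) (C : ℝ) (hC : 0 < C)
    (hbd : ∀ f : X → ℝ, Integrable f μ →
      eLpNorm (avgOp μ s f) 1 μ ≤ ENNReal.ofReal C * eLpNorm f 1 μ) :
    (∀ᵐ y ∂μ, conjFn μ s y ≤ ENNReal.ofReal C) ∧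
      essSup (conjFn μ s) μ ≤ ENNReal.ofReal C := by
  rcases isEmpty_or_nonempty X with hX | hX
  · have hμ0 : μ = 0 := by
      ext t ht
      have : t = (∅ : Set X) := Set.eq_empty_of_isEmpty t
      simp [this]
    subst hμ0
    refine ⟨by simp, ?_⟩
    rw [essSup_measure_zero]; exact bot_le
  obtain ⟨x0⟩ := hX
  haveI : SigmaFinite μ :=
    ⟨⟨⟨fun n => closedBall x0 n, fun _ => trivial,
      fun n => hfin _ isBounded_closedBall, iUnion_closedBall_nat x0⟩⟩⟩
  -- the hypotheses force X to be separable, hence second countable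
  haveI hSC : SecondCountableTopology X := by
    apply Metric.secondCountable_of_almost_dense_set
    intro ε hε
    -- take a maximal ε-separated set by Zorn
    have hchain : ∀ c ⊆ {D : Set X | D.Pairwise fun a b => ε < dist a b},
        IsChain (· ⊆ ·) c →
        ∃ ub ∈ {D : Set X | D.Pairwise fun a b => ε < dist a b}, ∀ t ∈ c, t ⊆ ub := by
      intro c hcS hch
      refine ⟨⋃₀ c, ?_, fun t ht => Set.subset_sUnion_of_mem ht⟩
      intro a ha b hb hab
      obtain ⟨t1, ht1c, hat1⟩ := ha
      obtain ⟨t2, ht2c, hbt2⟩ := hb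
      rcases hch.total ht1c ht2c with h | h
      · exact hcS ht2c (h hat1) hbt2 hab
      · exact hcS ht1c hat1 (h hbt2) hab
    obtain ⟨D, hDmax⟩ := zorn_subset {D : Set X | D.Pairwise fun a b => ε < dist a b} hchain
    have hDsep : D.Pairwise fun a b => ε < dist a b := hDmax.1
    -- D is countable since the balls ball d (ε/2) are disjoint with positive measure
    have hDc : D.Countable := by
      have hcnt := MeasureTheory.Measure.countable_meas_pos_of_disjoint_iUnion₀ (μ := μ)
        (As := fun d : D => ball (d : X) (ε / 2))
        (fun d => measurableSet_ball.nullMeasurableSet)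
        (fun d1 d2 hne => Disjoint.aedisjoint (ball_disjoint_ball (by
          have h := hDsep d1.2 d2.2 (Subtype.coe_injective.ne hne)
          linarith)))
      have hall : ∀ d : D, 0 < μ (ball (d : X) (ε / 2)) := fun d =>
        hpos _ isOpen_ball (nonempty_ball.2 (by linarith))
      have huniv : {i : D | 0 < μ (ball (i : X) (ε / 2))} = Set.univ :=
        Set.eq_univ_of_forall hall
      rw [huniv] at hcnt
      exact Set.countable_coe_iff.mp (Set.countable_univ_iff.mp hcnt)
    refine ⟨D, hDc, fun x => ?_⟩
    by_contra hcon
    push_neg at hcon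
    have hins : (insert x D) ∈ {D : Set X | D.Pairwise fun a b => ε < dist a b} := by
      apply Set.Pairwise.insert hDsep
      intro b hb _
      exact ⟨hcon b hb, by rw [dist_comm]; exact hcon b hb⟩
    have hsub : D ⊆ insert x D := Set.subset_insert x D
    have : insert x D ⊆ D := hDmax.2 hins hsub
    have hxD : x ∈ D := this (Set.mem_insert x D)
    have hfalse := hcon x hxD
    rw [dist_self] at hfalse
    linarith
  -- basic facts about balls
  have hBpos : ∀ x : X, 0 < μ (closedBall x s) := fun x =>
    lt_of_lt_of_le (hpos (ball x s) isOpen_ball (nonempty_ball.2 hs))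
      (measure_mono ball_subset_closedBall)
  have hBfin : ∀ x : X, μ (closedBall x s) < ⊤ := fun x => hfin _ isBounded_closedBall
  -- measurability of x ↦ μ (closedBall x s)
  have hSmeas : MeasurableSet {p : X × X | dist p.1 p.2 ≤ s} :=
    measurableSet_le measurable_dist measurable_const
  have hms : Measurable fun x : X => μ (closedBall x s) := by
    have hpre : ∀ x : X,
        (Prod.mk x ⁻¹' {p : X × X | dist p.1 p.2 ≤ s}) = closedBall x s := by
      intro x; ext y; simp [mem_closedBall, dist_comm]
    have h := measurable_measure_prodMk_left (ν := μ) hSmeas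
    simp only [hpre] at h
    exact h
  -- measurability of conjFn
  have hconj_eq : ∀ y : X, conjFn μ s y =
      ∫⁻ x, ({p : X × X | dist p.2 p.1 ≤ s}.indicator
        (fun p => (μ (closedBall p.2 s))⁻¹)) (y, x) ∂μ := by
    intro y
    rw [conjFn, ← lintegral_indicator measurableSet_closedBall]
    refine lintegral_congr fun x => ?_
    by_cases h : dist x y ≤ s <;>
      simp [Set.indicator_apply, mem_closedBall, h]
  have hconj_meas : Measurable (conjFn μ s) := by
    have hk : Measurable ({p : X × X | dist p.2 p.1 ≤ s}.indicator
        (fun p => (μ (closedBall p.2 s))⁻¹)) := by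
      apply Measurable.indicator ((hms.comp measurable_snd).inv)
      exact measurableSet_le (measurable_dist.comp measurable_swap) measurable_const
    have heq : conjFn μ s = fun y => ∫⁻ x, ({p : X × X | dist p.2 p.1 ≤ s}.indicator
        (fun p => (μ (closedBall p.2 s))⁻¹)) (y, x) ∂μ := funext hconj_eq
    rw [heq]
    exact hk.lintegral_prod_right'
  -- main estimate
  have key : ∀ E : Set X, MeasurableSet E → μ E < ⊤ →
      ∫⁻ y in E, conjFn μ s y ∂μ ≤ ENNReal.ofReal C * μ E := by
    intro E hE hEfin
    set f : X → ℝ := E.indicator fun _ => (1 : ℝ) with hf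
    have hfint : Integrable f μ := by
      rw [hf, integrable_indicator_iff hE]
      exact integrableOn_const hEfin.ne
    have hfnorm : eLpNorm f 1 μ = μ E := by
      rw [hf, eLpNorm_indicator_const hE one_ne_zero ENNReal.one_ne_top]
      simp
    have havg : ∀ x : X, avgOp μ s f x =
        (μ (closedBall x s)).toReal⁻¹ * (μ (closedBall x s ∩ E)).toReal := by
      intro x
      rw [avgOp, hf, setIntegral_indicator hE, setIntegral_const]
      simp
      exact Or.inl rfl
    -- the kernel
    set K : X → X → ℝ≥0∞ := fun x y =>
      {p : X × X | p.2 ∈ E ∧ dist p.2 p.1 ≤ s}.indicator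
        (fun p => (μ (closedBall p.1 s))⁻¹) (x, y) with hK
    have hKmeas : Measurable fun p : X × X => K p.1 p.2 := by
      have : (fun p : X × X => K p.1 p.2) =
          {p : X × X | p.2 ∈ E ∧ dist p.2 p.1 ≤ s}.indicator
            (fun p => (μ (closedBall p.1 s))⁻¹) := by
        ext p; rw [hK]
      rw [this]
      apply Measurable.indicator ((hms.comp measurable_fst).inv)
      rw [Set.setOf_and]
      exact (measurable_snd hE).inter
        (measurableSet_le (measurable_dist.comp measurable_swap) measurable_const)
    -- inner integral over y
    have hinner : ∀ x : X, ∫⁻ y, K x y ∂μ =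
        (μ (closedBall x s))⁻¹ * μ (closedBall x s ∩ E) := by
      intro x
      have hset : (fun y => K x y) = (closedBall x s ∩ E).indicator
          (fun _ => (μ (closedBall x s))⁻¹) := by
        ext y
        rw [hK]
        simp only [Set.indicator_apply, Set.mem_setOf_eq, Set.mem_inter_iff, mem_closedBall]
        by_cases h1 : y ∈ E <;> by_cases h2 : dist y x ≤ s <;> simp [h1, h2]
      rw [hset, lintegral_indicator_const (measurableSet_closedBall.inter hE)]
    -- inner integral over x
    have hinner' : ∀ y : X, ∫⁻ x, K x y ∂μ = E.indicator (conjFn μ s) y := by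
      intro y
      by_cases hy : y ∈ E
      · rw [Set.indicator_of_mem hy]
        have hset : (fun x => K x y) = (closedBall y s).indicator
            (fun x => (μ (closedBall x s))⁻¹) := by
          ext x
          rw [hK]
          by_cases h2 : dist x y ≤ s <;>
            simp [Set.indicator_apply, Set.mem_setOf_eq, mem_closedBall, hy,
              dist_comm y x, h2]
        rw [hset, lintegral_indicator measurableSet_closedBall]
        rfl
      · rw [Set.indicator_of_notMem hy]
        have hset : (fun x => K x y) = fun _ => 0 := by
          ext x
          rw [hK]
          simp [Set.indicator_apply, hy]
        rw [hset, lintegral_zero]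
    -- compute eLpNorm of avgOp
    have hAnorm : eLpNorm (avgOp μ s f) 1 μ = ∫⁻ y in E, conjFn μ s y ∂μ := by
      rw [eLpNorm_one_eq_lintegral_enorm]
      have step1 : ∀ x : X, ‖avgOp μ s f x‖ₑ =
          (μ (closedBall x s))⁻¹ * μ (closedBall x s ∩ E) := by
        intro x
        rw [havg x]
        have h1 : (0:ℝ) ≤ (μ (closedBall x s)).toReal⁻¹ := by positivity
        have h2 : (0:ℝ) ≤ (μ (closedBall x s ∩ E)).toReal := ENNReal.toReal_nonneg
        rw [Real.enorm_eq_ofReal (mul_nonneg h1 h2), ENNReal.ofReal_mul h1,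
          ENNReal.ofReal_inv_of_pos (ENNReal.toReal_pos (hBpos x).ne' (hBfin x).ne),
          ENNReal.ofReal_toReal (hBfin x).ne,
          ENNReal.ofReal_toReal
            ((lt_of_le_of_lt (measure_mono Set.inter_subset_left) (hBfin x)).ne)]
      calc ∫⁻ x, ‖avgOp μ s f x‖ₑ ∂μ
          = ∫⁻ x, (μ (closedBall x s))⁻¹ * μ (closedBall x s ∩ E) ∂μ :=
            lintegral_congr step1
        _ = ∫⁻ x, ∫⁻ y, K x y ∂μ ∂μ :=
            lintegral_congr fun x => (hinner x).symm
        _ = ∫⁻ y, ∫⁻ x, K x y ∂μ ∂μ :=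
            lintegral_lintegral_swap hKmeas.aemeasurable
        _ = ∫⁻ y, E.indicator (conjFn μ s) y ∂μ :=
            lintegral_congr fun y => hinner' y
        _ = ∫⁻ y in E, conjFn μ s y ∂μ := lintegral_indicator hE _
    have := hbd f hfint
    rw [hAnorm, hfnorm] at this
    exact this
  have hae : conjFn μ s ≤ᵐ[μ] fun _ => ENNReal.ofReal C := by
    apply ae_le_of_forall_setLIntegral_le_of_sigmaFinite hconj_meas
    intro t ht htfin
    rw [setLIntegral_const]
    exact key t ht htfin
  exact ⟨hae, essSup_le_of_ae_le _ hae⟩
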